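/- If a superior edge set 𝓔 = E_{k_1} ∪ E_{k_2} ∪ ... ∪ E_{k_q}, where the k_i are pairwise distinct and each E_{k_i} is a k_i-superior edge set with respect to G, is inserted into a graph G, then the core number of every vertex increases by at most 1. -/

import Mathlib

open SimpleGraph

/-- The core number of a vertex: the largest `k` such that the vertex lies in a
subgraph of `G` with minimum degree at least `k`. -/
noncomputable def coreNumber {V : Type*} (G : SimpleGraph V) (v : V) : ℕ :=
  sSup {k : ℕ | ∃ H : G.Subgraph, v ∈ H.verts ∧ ∀ w ∈ H.verts, k ≤ (H.neighborSet w).ncard}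

/-- `S` is a `k`-superior edge set of new edges with respect to `G`. -/
def IsKSuperiorInsertSet {V : Type*} (G : SimpleGraph V) (k : ℕ) (S : Set (Sym2 V)) : Prop :=
  (∀ e ∈ S, e ∉ G.edgeSet ∧ ∃ u v : V, u ≠ v ∧ e = s(u,v) ∧
      coreNumber G u = k ∧ coreNumber G u ≤ coreNumber G v) ∧
  ∀ e₁ ∈ S, ∀ e₂ ∈ S, e₁ ≠ e₂ → ∀ u : V, u ∈ e₁ → u ∈ e₂ → k < coreNumber G u

section Helpers

variable {V : Type*} [Fintype V]

lemma coreSet_bddAbove (G : SimpleGraph V) (v : V) :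
    BddAbove {k : ℕ | ∃ H : G.Subgraph, v ∈ H.verts ∧
      ∀ w ∈ H.verts, k ≤ (H.neighborSet w).ncard} := by
  refine ⟨Fintype.card V, fun k hk => ?_⟩
  obtain ⟨H, hv, hdeg⟩ := hk
  calc k ≤ (H.neighborSet v).ncard := hdeg v hv
    _ ≤ (Set.univ : Set V).ncard := Set.ncard_le_ncard (Set.subset_univ _) Set.finite_univ
    _ = Fintype.card V := by simp [Set.ncard_univ]

lemma coreSet_nonempty (G : SimpleGraph V) (v : V) :
    (0 : ℕ) ∈ {k : ℕ | ∃ H : G.Subgraph, v ∈ H.verts ∧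
      ∀ w ∈ H.verts, k ≤ (H.neighborSet w).ncard} :=
  ⟨⊤, by simp, fun _ _ => Nat.zero_le _⟩

lemma le_coreNumber (G : SimpleGraph V) (v : V) {k : ℕ} (H : G.Subgraph)
    (hv : v ∈ H.verts) (hdeg : ∀ w ∈ H.verts, k ≤ (H.neighborSet w).ncard) :
    k ≤ coreNumber G v :=
  le_csSup (coreSet_bddAbove G v) ⟨H, hv, hdeg⟩

lemma coreNumber_witness (G : SimpleGraph V) (v : V) :
    ∃ H : G.Subgraph, v ∈ H.verts ∧
      ∀ w ∈ H.verts, coreNumber G v ≤ (H.neighborSet w).ncard :=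
  Nat.sSup_mem ⟨0, coreSet_nonempty G v⟩ (coreSet_bddAbove G v)

lemma neighborSet_mono {G : SimpleGraph V} {H K : G.Subgraph} (h : H ≤ K) (w : V) :
    H.neighborSet w ⊆ K.neighborSet w := fun _ hx => h.2 hx

end Helpers

theorem superiorInsertSet_core_increase_le_one {V : Type*} [Fintype V] (G : SimpleGraph V)
    (ks : Finset ℕ) (F : ℕ → Set (Sym2 V))
    (hF : ∀ k ∈ ks, IsKSuperiorInsertSet G k (F k))
    (S : Set (Sym2 V)) (hS : S = ⋃ k ∈ ks, F k) (v : V) :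
    coreNumber (G ⊔ fromEdgeSet S) v ≤ coreNumber G v + 1 := by
  set G' := G ⊔ fromEdgeSet S with hG'
  suffices h : ∀ n, ∀ u : V, coreNumber G u = n → coreNumber G' u ≤ n + 1 from h _ v rfl
  intro n
  induction n using Nat.strong_induction_on with
  | _ n IH =>
  intro u hu
  by_contra hcon
  push_neg at hcon
  have hc : n + 2 ≤ coreNumber G' u := hcon
  obtain ⟨H, huH, hH⟩ := coreNumber_witness G' u
  have hHdeg : ∀ w ∈ H.verts, n + 2 ≤ (H.neighborSet w).ncard :=
    fun w hw => hc.trans (hH w hw)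
  -- every vertex of H has coreNumber G ≥ n, by minimality of the violator
  have hlow : ∀ w ∈ H.verts, n ≤ coreNumber G w := by
    intro w hw
    by_contra hlt
    push_neg at hlt
    have h1 : coreNumber G' w ≤ coreNumber G w + 1 := IH _ hlt w rfl
    have h2 : n + 2 ≤ coreNumber G' w := le_coreNumber G' w H hw hHdeg
    omega
  -- inserted edges at a vertex of core exactly n : at most one
  have hmemF : ∀ w ∈ H.verts, coreNumber G w = n →
      ∀ x, H.Adj w x → ¬ G.Adj w x → s(w, x) ∈ F n ∧ n ∈ ks := by
    intro w hw hwn x hadj hnadj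
    have hx : G'.Adj w x := H.adj_sub hadj
    rw [hG', sup_adj] at hx
    rcases hx with h | h
    · exact absurd h hnadj
    rw [fromEdgeSet_adj] at h
    obtain ⟨hmem, -⟩ := h
    rw [hS] at hmem
    simp only [Set.mem_iUnion] at hmem
    obtain ⟨j, hj, hjm⟩ := hmem
    obtain ⟨-, a, b, -, heq, hca, hcb⟩ := (hF j hj).1 _ hjm
    have hxH : x ∈ H.verts := H.edge_vert (H.adj_symm hadj)
    have hcx : n ≤ coreNumber G x := hlow x hxH
    have hjn : j = n := by
      rw [Sym2.eq_iff] at heq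
      rcases heq with ⟨ha, hb⟩ | ⟨ha, hb⟩ <;> subst ha <;> subst hb <;> omega
    rw [hjn] at hjm
    exact ⟨hjm, hjn ▸ hj⟩
  have hins : ∀ w ∈ H.verts, coreNumber G w = n →
      {x | H.Adj w x ∧ ¬ G.Adj w x}.Subsingleton := by
    intro w hw hwn x1 hx1 x2 hx2
    by_contra hne
    obtain ⟨he1, hnks⟩ := hmemF w hw hwn x1 hx1.1 hx1.2
    obtain ⟨he2, -⟩ := hmemF w hw hwn x2 hx2.1 hx2.2
    have hee : s(w, x1) ≠ s(w, x2) := by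
      intro h
      rw [Sym2.eq_iff] at h
      rcases h with ⟨-, h⟩ | ⟨h1, h2⟩
      · exact hne h
      · exact hne (h2.trans h1)
    have := (hF n hnks).2 _ he1 _ he2 hee w (Sym2.mem_mk_left w x1) (Sym2.mem_mk_left w x2)
    omega
  -- the G-part of H
  let HG : G.Subgraph :=
    { verts := H.verts
      Adj := fun a b => H.Adj a b ∧ G.Adj a b
      adj_sub := fun h => h.2
      edge_vert := fun h => H.edge_vert h.1
      symm := ⟨fun a b h => ⟨H.adj_symm h.1, h.2.symm⟩⟩ }
  -- the (n+1)-core of G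
  let 𝒟 : Set G.Subgraph := {D | ∀ w ∈ D.verts, n + 1 ≤ (D.neighborSet w).ncard}
  let C : G.Subgraph := sSup 𝒟
  let K : G.Subgraph := HG ⊔ C
  have hCcase : ∀ w ∈ C.verts, n + 1 ≤ (K.neighborSet w).ncard := by
    intro w hw
    rw [show C = sSup 𝒟 from rfl, Subgraph.verts_sSup] at hw
    simp only [Set.mem_iUnion] at hw
    obtain ⟨D, hD, hwD⟩ := hw
    have hDK : D ≤ K := le_trans (le_sSup hD) le_sup_right
    exact (hD w hwD).trans
      (Set.ncard_le_ncard (neighborSet_mono hDK w) (Set.toFinite _))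
  have hKdeg : ∀ w ∈ K.verts, n + 1 ≤ (K.neighborSet w).ncard := by
    intro w hw
    rw [show K = HG ⊔ C from rfl, Subgraph.verts_sup] at hw
    rcases hw with hw | hw
    · -- w ∈ H.verts
      rcases eq_or_lt_of_le (hlow w hw) with hwn | hwn
      · -- core G w = n : at most one inserted neighbor in H
        have hsub : H.neighborSet w ⊆ HG.neighborSet w ∪ {x | H.Adj w x ∧ ¬ G.Adj w x} := by
          intro x hx
          by_cases hg : G.Adj w x
          · exact Or.inl ⟨hx, hg⟩
          · exact Or.inr ⟨hx, hg⟩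
        have h1 : (H.neighborSet w).ncard ≤ (HG.neighborSet w).ncard + 1 := by
          refine le_trans (Set.ncard_le_ncard hsub (Set.toFinite _)) ?_
          refine le_trans (Set.ncard_union_le _ _) ?_
          have : {x | H.Adj w x ∧ ¬ G.Adj w x}.ncard ≤ 1 :=
            (Set.ncard_le_one (Set.toFinite _)).2 (fun a ha b hb => hins w hw hwn.symm ha hb)
          omega
        have h2 : n + 2 ≤ (H.neighborSet w).ncard := hHdeg w hw
        have h3 : HG.neighborSet w ⊆ K.neighborSet w := neighborSet_mono le_sup_left w
        have h4 : (HG.neighborSet w).ncard ≤ (K.neighborSet w).ncard :=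
          Set.ncard_le_ncard h3 (Set.toFinite _)
        omega
      · -- core G w ≥ n + 1 : w lies in the (n+1)-core
        obtain ⟨D, hwD, hDdeg⟩ := coreNumber_witness G w
        have hD𝒟 : D ∈ 𝒟 := fun x hx => le_trans hwn (hDdeg x hx)
        have hwC : w ∈ C.verts := by
          rw [show C = sSup 𝒟 from rfl, Subgraph.verts_sSup]
          simp only [Set.mem_iUnion]
          exact ⟨D, hD𝒟, hwD⟩
        exact hCcase w hwC
    · exact hCcase w hw
  have huK : u ∈ K.verts := by
    rw [show K = HG ⊔ C from rfl, Subgraph.verts_sup]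
    exact Or.inl huH
  have : n + 1 ≤ coreNumber G u := le_coreNumber G u K huK hKdeg
  omega
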